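/- A finite irreflexive oriented graph G has an iot-injective homomorphism to the reflexive tournament T_2^r if and only if each connected component D of G satisfies one of the following: (a) D is an oriented path on at most four vertices; (b) D is an oriented path with an alternating matching; (c) D is an oriented cycle on 4k vertices for some k ≥ 1 with an alternating matching. -/

import Mathlib

/-- A homomorphism of directed graphs (given as binary relations). -/
def IsHom {A : Type} {B : Type} (R : A → A → Prop) (S : B → B → Prop) (f : A → B) : Prop :=
  ∀ x y, R x y → S (f x) (f y)

/-- ios-injectivity: injective on in-neighbourhoods and on out-neighbourhoods separately. -/
def IosInj {A : Type} {B : Type} (R : A → A → Prop) (f : A → B) : Prop :=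
  ∀ x : A, Set.InjOn f {y | R y x} ∧ Set.InjOn f {y | R x y}

/-- iot-injectivity: injective on the union of in- and out-neighbourhoods. -/
def IotInj {A : Type} {B : Type} (R : A → A → Prop) (f : A → B) : Prop :=
  ∀ x : A, Set.InjOn f ({y | R y x} ∪ {y | R x y})

/-- An oriented graph: between two distinct vertices at most one arc. -/
def IsOriented {A : Type} (R : A → A → Prop) : Prop :=
  ∀ x y, x ≠ y → ¬(R x y ∧ R y x)

/-- Irreflexive (no loops). -/
def NoLoops {A : Type} (R : A → A → Prop) : Prop := ∀ x, ¬ R x x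

/-- `R` is (isomorphic to) a subgraph of `S`: an injective arc-preserving map. -/
def Subg {A : Type} {B : Type} (R : A → A → Prop) (S : B → B → Prop) : Prop :=
  ∃ g : A → B, Function.Injective g ∧ IsHom R S g

/-- There exists an ios-injective homomorphism of `R` to `S`. -/
def IosHomEx {A : Type} {B : Type} (R : A → A → Prop) (S : B → B → Prop) : Prop :=
  ∃ g : A → B, IsHom R S g ∧ IosInj R g

/-- There exists an iot-injective homomorphism of `R` to `S`. -/
def IotHomEx {A : Type} {B : Type} (R : A → A → Prop) (S : B → B → Prop) : Prop :=
  ∃ g : A → B, IsHom R S g ∧ IotInj R g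

/-- Converse (all arcs reversed). -/
def convRel {A : Type} (R : A → A → Prop) : A → A → Prop := fun x y => R y x

/-- Transitive tournament `T_n`. -/
def TTrel (n : ℕ) : Fin n → Fin n → Prop := fun i j => i < j

/-- Reflexive transitive tournament `T_2^r`. -/
def T2r : Fin 2 → Fin 2 → Prop := fun i j => i ≤ j

/-- Reflexive one-vertex tournament `T_1^r`. -/
def T1r : PUnit → PUnit → Prop := fun _ _ => True

/-- Directed path `P_N` on `N` vertices. -/
def DPathRel (N : ℕ) : Fin N → Fin N → Prop := fun x y => (y : ℕ) = (x : ℕ) + 1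

/-- Directed cycle `C_m` on `m` vertices. -/
def DCycRel (m : ℕ) : Fin m → Fin m → Prop := fun x y => (y : ℕ) = ((x : ℕ) + 1) % m

/-- Oriented path on `n+1` vertices: edge `t` (between `v_t` and `v_{t+1}`) is
oriented forwards iff `σ t = true`. -/
def OPathRel (n : ℕ) (σ : ℕ → Bool) : Fin (n + 1) → Fin (n + 1) → Prop :=
  fun x y => ∃ t : ℕ, t < n ∧
    ((σ t = true ∧ (x : ℕ) = t ∧ (y : ℕ) = t + 1) ∨
     (σ t = false ∧ (x : ℕ) = t + 1 ∧ (y : ℕ) = t))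

/-- Oriented cycle on `m` vertices: edge `t` (between `v_t` and `v_{t+1 mod m}`) is
oriented forwards iff `σ t = true`. -/
def OCycRel (m : ℕ) (σ : ℕ → Bool) : Fin m → Fin m → Prop :=
  fun x y => ∃ t : ℕ, t < m ∧
    ((σ t = true ∧ (x : ℕ) = t ∧ (y : ℕ) = (t + 1) % m) ∨
     (σ t = false ∧ (x : ℕ) = (t + 1) % m ∧ (y : ℕ) = t))

/-- The hat `H_3`: arcs `v_0 → v_1` and `v_2 → v_1`. -/
def H3rel : Fin 3 → Fin 3 → Prop := fun i j => (i = 0 ∧ j = 1) ∨ (i = 2 ∧ j = 1)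

/-- `H_4`: arcs `h_0 → h_3`, `h_1 → h_3`, `h_2 → h_3`. -/
def H4rel : Fin 4 → Fin 4 → Prop := fun i j => (i = 0 ∨ i = 1 ∨ i = 2) ∧ j = 3

/-- `A_4`: arcs `h_0 → h_2`, `h_1 → h_2`, `h_2 → h_3`. -/
def A4rel : Fin 4 → Fin 4 → Prop := fun i j => ((i = 0 ∨ i = 1) ∧ j = 2) ∨ (i = 2 ∧ j = 3)

/-- `H_5`: two directed paths of length two with a common initial vertex `0`:
arcs `0→1`, `1→2`, `0→3`, `3→4`. -/
def H5rel : Fin 5 → Fin 5 → Prop :=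
  fun i j => (i = 0 ∧ j = 1) ∨ (i = 1 ∧ j = 2) ∨ (i = 0 ∧ j = 3) ∨ (i = 3 ∧ j = 4)

/-- `B_2`: arcs `a→b`, `c→b`, `c→d`, `e→d` (vertices `a,b,c,d,e = 0,1,2,3,4`). -/
def B2rel : Fin 5 → Fin 5 → Prop :=
  fun i j => (i = 0 ∧ j = 1) ∨ (i = 2 ∧ j = 1) ∨ (i = 2 ∧ j = 3) ∨ (i = 4 ∧ j = 3)

/-- `X_2`: orientation of `K_{1,4}` with centre `0` of in-degree 2 and out-degree 2:
arcs `1→0`, `2→0`, `0→3`, `0→4`. -/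
def X2rel : Fin 5 → Fin 5 → Prop :=
  fun i j => ((i = 1 ∨ i = 2) ∧ j = 0) ∨ (i = 0 ∧ (j = 3 ∨ j = 4))

/-- An orientation of the star `K_{1,3}`: centre `none`, leaves `some i`;
edge `i` points away from the centre iff `ε i = true`. -/
def starRel (ε : Fin 3 → Bool) : Option (Fin 3) → Option (Fin 3) → Prop :=
  fun u v => ∃ i : Fin 3,
    (ε i = true ∧ u = none ∧ v = some i) ∨ (ε i = false ∧ u = some i ∧ v = none)

/-- An oriented `k`-colouring: for arcs `xy` and `vw`, `f x = f w → f y ≠ f v`. -/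
def OrCol {A : Type} (R : A → A → Prop) {k : ℕ} (f : A → Fin k) : Prop :=
  ∀ x y v w, R x y → R v w → f x = f w → f y ≠ f v

/-- Proper: distinct adjacent vertices get different colours. -/
def ProperCol {A : Type} {B : Type} (R : A → A → Prop) (f : A → B) : Prop :=
  ∀ x y, R x y → x ≠ y → f x ≠ f y

/-- Disjoint union of two directed graphs. -/
def sumRel {A B : Type} (R : A → A → Prop) (S : B → B → Prop) : A ⊕ B → A ⊕ B → Prop
  | Sum.inl a, Sum.inl a' => R a a'
  | Sum.inr b, Sum.inr b' => S b b'
  | _, _ => False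

/-- Net-length of the oriented cycle on `m` vertices with orientation `σ`:
number of forwards arcs minus number of backwards arcs. -/
def netLen (m : ℕ) (σ : ℕ → Bool) : ℤ :=
  (((Finset.range m).filter fun t => σ t = true).card : ℤ) -
    (((Finset.range m).filter fun t => σ t = false).card : ℤ)

/-- Undirected connectivity relation of a directed graph. -/
def UConn {V : Type} (E : V → V → Prop) : V → V → Prop :=
  Relation.ReflTransGen (fun a b => E a b ∨ E b a)

/-- The relation induced on the connected component of `x`. -/
def componentRel {V : Type} (E : V → V → Prop) (x : V) :
    {y : V // UConn E x y} → {y : V // UConn E x y} → Prop :=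
  fun a b => E a.val b.val

/-- Isomorphism of directed graphs. -/
def IsoRel {A B : Type} (R : A → A → Prop) (S : B → B → Prop) : Prop :=
  ∃ e : A ≃ B, ∀ a a', R a a' ↔ S (e a) (e a')

/-- An alternating matching in the oriented path on `n+1` vertices (edges `0,…,n-1`,
orientations `σ`): `μ t` means edge `t` is in the matching.  It is a matching,
saturates every internal (degree-two) vertex, and consecutive matching edges have
opposite orientations. -/
def PathAltMatching (n : ℕ) (σ : ℕ → Bool) (μ : ℕ → Prop) : Prop :=
  (∀ t, μ t → t < n) ∧
  (∀ t, ¬(μ t ∧ μ (t + 1))) ∧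
  (∀ v, 1 ≤ v → v + 1 ≤ n → (μ (v - 1) ∨ μ v)) ∧
  (∀ t t', μ t → μ t' → t < t' → (∀ s, t < s → s < t' → ¬ μ s) → σ t ≠ σ t')

/-- An alternating matching in the oriented cycle on `m` vertices (edges mod `m`):
a matching saturating every vertex whose successive edges (cyclically) have
opposite orientations. -/
def CycAltMatching (m : ℕ) (σ : ℕ → Bool) (μ : ℕ → Prop) : Prop :=
  (∀ t, μ t → t < m) ∧
  (∀ t, t < m → ¬(μ t ∧ μ ((t + 1) % m))) ∧
  (∀ v, v < m → (μ v ∨ μ ((v + m - 1) % m))) ∧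
  (∀ t d, t < m → 0 < d → d < m → μ t → μ ((t + d) % m) →
    (∀ s, 0 < s → s < d → ¬ μ ((t + s) % m)) → σ t ≠ σ ((t + d) % m))

section AuxStmt15

open Relation

/-- Symmetrised adjacency. -/
def AdjR {W : Type} (R : W → W → Prop) : W → W → Prop := fun a b => R a b ∨ R b a

lemma adjR_symm {W : Type} {R : W → W → Prop} {a b : W} (h : AdjR R a b) : AdjR R b a :=
  h.symm

open Classical in
/-- One step of the non-backtracking walk. -/
noncomputable def wstep {W : Type} (R : W → W → Prop) (prev cur : W) : W :=
  if h : ∃ c, AdjR R cur c ∧ c ≠ prev then h.choose else cur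

lemma wstep_adj {W : Type} {R : W → W → Prop} {prev cur : W}
    (h : ∃ c, AdjR R cur c ∧ c ≠ prev) : AdjR R cur (wstep R prev cur) ∧ wstep R prev cur ≠ prev := by
  rw [wstep, dif_pos h]; exact h.choose_spec

lemma wstep_ne {W : Type} {R : W → W → Prop} (hirr : NoLoops R) {prev cur : W}
    (h : AdjR R cur (wstep R prev cur)) : wstep R prev cur ≠ prev := by
  by_cases hex : ∃ c, AdjR R cur c ∧ c ≠ prev
  · exact (wstep_adj hex).2
  · rw [wstep, dif_neg hex] at h ⊢
    rcases h with h | h <;> exact absurd h (hirr cur)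

/-- The walk as a sequence of consecutive pairs. -/
noncomputable def wpair {W : Type} (R : W → W → Prop) (a b : W) : ℕ → W × W
  | 0 => (a, b)
  | (i+1) => ((wpair R a b i).2, wstep R (wpair R a b i).1 (wpair R a b i).2)

/-- The walk. -/
noncomputable def wv {W : Type} (R : W → W → Prop) (a b : W) (i : ℕ) : W := (wpair R a b i).1

lemma wv_zero {W : Type} (R : W → W → Prop) (a b : W) : wv R a b 0 = a := rfl
lemma wv_one {W : Type} (R : W → W → Prop) (a b : W) : wv R a b 1 = b := rfl
lemma wv_two {W : Type} (R : W → W → Prop) (a b : W) (i : ℕ) :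
    wv R a b (i+2) = wstep R (wv R a b i) (wv R a b (i+1)) := rfl

/-- Aliveness of walk step `i`. -/
def aliveW {W : Type} (R : W → W → Prop) (a b : W) (i : ℕ) : Prop :=
  AdjR R (wv R a b i) (wv R a b (i+1))

lemma alive_ne {W : Type} {R : W → W → Prop} (hirr : NoLoops R) {a b : W} {i : ℕ}
    (h : aliveW R a b i) : wv R a b i ≠ wv R a b (i+1) := by
  intro he; rcases h with h | h <;> rw [he] at h <;> exact hirr _ h

lemma alive_skip {W : Type} {R : W → W → Prop} (hirr : NoLoops R) {a b : W} {i : ℕ}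
    (h : aliveW R a b (i+1)) : wv R a b (i+2) ≠ wv R a b i := by
  rw [wv_two]; exact wstep_ne hirr h

/-- Analysis of the first repetition in the walk. -/
lemma first_repeat {W : Type} {R : W → W → Prop} (hirr : NoLoops R) {a b : W}
    (htwo : ∀ w n1 n2, AdjR R w n1 → AdjR R w n2 → n1 ≠ n2 → ∀ c, AdjR R w c → c = n1 ∨ c = n2)
    {i j : ℕ} (hall : ∀ t, t < j → aliveW R a b t)
    (hij : i < j) (heq : wv R a b i = wv R a b j)
    (hmin : ∀ j' i', j' < j → i' < j' → wv R a b i' ≠ wv R a b j') :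
    i = 0 ∧ 3 ≤ j := by
  have hne1 : j ≠ i + 1 := by
    intro h; subst h; exact alive_ne hirr (hall i hij) heq
  have hne2 : j ≠ i + 2 := by
    intro h; subst h
    exact alive_skip hirr (hall (i+1) (by omega)) heq.symm
  have hj3 : i + 3 ≤ j := by omega
  have hi0 : i = 0 := by
    by_contra hi
    have hi1 : 1 ≤ i := by omega
    -- neighbours of wv i
    have hn1 : AdjR R (wv R a b i) (wv R a b (i-1)) := by
      have := hall (i-1) (by omega)
      have h' : aliveW R a b (i-1) := this
      unfold aliveW at h'
      rw [show i - 1 + 1 = i by omega] at h'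
      exact (fun h => h.symm) h'
    have hn2 : AdjR R (wv R a b i) (wv R a b (i+1)) := hall i hij
    have hnd : wv R a b (i-1) ≠ wv R a b (i+1) := by
      have := alive_skip hirr (a := a) (b := b) (i := i - 1)
      rw [show i - 1 + 1 = i by omega, show i - 1 + 2 = i + 1 by omega] at this
      exact fun he => (this (hall i hij)) he.symm
    have hc : AdjR R (wv R a b i) (wv R a b (j-1)) := by
      have h' : aliveW R a b (j-1) := hall (j-1) (by omega)
      unfold aliveW at h'
      rw [show j - 1 + 1 = j by omega] at h'
      rw [heq]
      exact (fun h => h.symm) h'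
    rcases htwo _ _ _ hn1 hn2 hnd _ hc with h | h
    · exact hmin (j-1) (i-1) (by omega) (by omega) h.symm
    · exact hmin (j-1) (i+1) (by omega) (by omega) h.symm
  refine ⟨hi0, ?_⟩
  omega


/-- Classification of connected oriented graphs of maximum degree two. -/
theorem classify {W : Type} [Finite W] [Nonempty W] (R : W → W → Prop)
    (hor : IsOriented R) (hirr : NoLoops R)
    (hdeg : ∀ w n1 n2 n3 : W, AdjR R w n1 → AdjR R w n2 → AdjR R w n3 →
      n1 = n2 ∨ n1 = n3 ∨ n2 = n3)
    (hconn : ∀ p q : W, UConn R p q) :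
    (∃ n σ, IsoRel (OPathRel n σ) R) ∨ ∃ m σ, 3 ≤ m ∧ IsoRel (OCycRel m σ) R := by
  classical
  have htwo : ∀ w n1 n2, AdjR R w n1 → AdjR R w n2 → n1 ≠ n2 → ∀ c, AdjR R w c → c = n1 ∨ c = n2 := by
    intro w n1 n2 h1 h2 hne c hc
    rcases hdeg w n1 n2 c h1 h2 hc with h | h | h
    · exact absurd h hne
    · exact Or.inl h.symm
    · exact Or.inr h.symm
  by_cases hone : ∃ u : W, ∀ c c', AdjR R u c → AdjR R u c' → c = c'
  · obtain ⟨u, hu⟩ := hone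
    by_cases hnb : ∃ c, AdjR R u c
    · -- path case
      obtain ⟨x1, hx1⟩ := hnb
      have halive0 : aliveW R u x1 0 := by
        unfold aliveW; rw [wv_zero, wv_one]; exact hx1
      have norep : ∀ j, (∀ t, t < j → aliveW R u x1 t) → ∀ i, i < j →
          wv R u x1 i ≠ wv R u x1 j := by
        intro j
        induction j using Nat.strong_induction_on with
        | _ j ih =>
          intro hall i hij heq
          have hmin : ∀ j' i', j' < j → i' < j' → wv R u x1 i' ≠ wv R u x1 j' := by
            intro j' i' hj' hi'
            exact ih j' hj' (fun t ht => hall t (by omega)) i' hi'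
          obtain ⟨hi0, hj3⟩ := first_repeat hirr htwo hall hij heq hmin
          subst hi0
          have hadj : AdjR R u (wv R u x1 (j-1)) := by
            have hja : aliveW R u x1 (j-1) := hall (j-1) (by omega)
            unfold aliveW at hja
            rw [show j-1+1 = j by omega, ← heq, wv_zero] at hja
            exact hja.symm
          have hx1' : wv R u x1 (j-1) = x1 := hu _ _ hadj hx1
          exact hmin (j-1) 1 (by omega) (by omega) (by rw [wv_one, hx1'])
      have hstall : ∃ T, ¬ aliveW R u x1 T := by
        by_contra hc
        push_neg at hc
        have hinj : Function.Injective (wv R u x1) := by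
          intro i j hij'
          rcases lt_trichotomy i j with h|h|h
          · exact absurd hij' (norep j (fun t _ => hc t) i h)
          · exact h
          · exact absurd hij'.symm (norep i (fun t _ => hc t) j h)
        obtain ⟨i, j, hne, he⟩ := Finite.exists_ne_map_eq_of_infinite (wv R u x1)
        exact hne (hinj he)
      set T := Nat.find hstall with hTset
      have hTdef : ¬ aliveW R u x1 T := Nat.find_spec hstall
      have hallT : ∀ t, t < T → aliveW R u x1 t := fun t ht =>
        of_not_not (Nat.find_min hstall ht)
      have hT1 : 1 ≤ T := by
        rcases Nat.eq_zero_or_pos T with h|h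
        · rw [h] at hTdef; exact absurd halive0 hTdef
        · exact h
      have hinj2 : ∀ i j, i ≤ T → j ≤ T → wv R u x1 i = wv R u x1 j → i = j := by
        intro i j hi hj he
        rcases lt_trichotomy i j with h|h|h
        · exact absurd he (norep j (fun t ht => hallT t (by omega)) i h)
        · exact h
        · exact absurd he.symm (norep i (fun t ht => hallT t (by omega)) j h)
      have hTnb : ∀ c, AdjR R (wv R u x1 T) c → c = wv R u x1 (T-1) := by
        intro c hc
        by_contra hne
        apply hTdef
        unfold aliveW
        rw [show T + 1 = (T-1) + 2 by omega, wv_two, show T-1+1 = T by omega]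
        exact (wstep_adj ⟨c, hc, hne⟩).1
      have hnbr : ∀ i c, i ≤ T → AdjR R (wv R u x1 i) c →
          ∃ k, k ≤ T ∧ c = wv R u x1 k ∧ (k = i + 1 ∨ k + 1 = i) := by
        intro i c hi hc
        rcases Nat.eq_zero_or_pos i with rfl|hip
        · rw [wv_zero] at hc
          have hcx : c = x1 := hu _ _ hc hx1
          exact ⟨1, hT1, by rw [hcx, wv_one], Or.inl rfl⟩
        · rcases eq_or_lt_of_le hi with heqT|hiT
          · refine ⟨i-1, by omega, ?_, Or.inr (by omega)⟩
            rw [heqT] at hc ⊢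
            exact hTnb c hc
          · have h1 : AdjR R (wv R u x1 i) (wv R u x1 (i-1)) := by
              have h' := hallT (i-1) (by omega)
              unfold aliveW at h'
              rw [show i-1+1 = i by omega] at h'
              exact h'.symm
            have h2 : AdjR R (wv R u x1 i) (wv R u x1 (i+1)) := hallT i hiT
            have hd : wv R u x1 (i-1) ≠ wv R u x1 (i+1) := by
              have hs := alive_skip hirr (R := R) (a := u) (b := x1) (i := i-1)
              rw [show i-1+1 = i by omega, show i-1+2 = i+1 by omega] at hs
              exact fun he => (hs (hallT i hiT)) he.symm
            rcases htwo _ _ _ h1 h2 hd c hc with h|h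
            · exact ⟨i-1, by omega, h, Or.inr (by omega)⟩
            · exact ⟨i+1, by omega, h, Or.inl rfl⟩
      have hcover : ∀ w : W, ∃ i, i ≤ T ∧ wv R u x1 i = w := by
        intro w
        have h := hconn u w
        induction h with
        | refl => exact ⟨0, by omega, wv_zero R u x1⟩
        | @tail b c hub hbc ih =>
          obtain ⟨i, hi, hib⟩ := ih
          rw [← hib] at hbc
          obtain ⟨k, hk, hck, _⟩ := hnbr i c hi hbc
          exact ⟨k, hk, hck.symm⟩
      have hbij : Function.Bijective (fun i : Fin (T+1) => wv R u x1 i.val) := by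
        constructor
        · intro i j h
          exact Fin.ext (hinj2 i.val j.val (by omega) (by omega) h)
        · intro w
          obtain ⟨i, hi, he⟩ := hcover w
          exact ⟨⟨i, by omega⟩, he⟩
      left
      refine ⟨T, fun t => decide (R (wv R u x1 t) (wv R u x1 (t+1))), Equiv.ofBijective _ hbij, ?_⟩
      intro p q
      constructor
      · rintro ⟨t, ht, (⟨hσ, hx, hy⟩|⟨hσ, hx, hy⟩)⟩
        · have hR := of_decide_eq_true hσ
          show R (wv R u x1 p.val) (wv R u x1 q.val)
          rw [hx, hy]; exact hR
        · have hR := of_decide_eq_false hσ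
          have hA : AdjR R (wv R u x1 t) (wv R u x1 (t+1)) := hallT t ht
          show R (wv R u x1 p.val) (wv R u x1 q.val)
          rw [hx, hy]
          rcases hA with h|h
          · exact absurd h hR
          · exact h
      · intro hR
        have hR' : R (wv R u x1 p.val) (wv R u x1 q.val) := hR
        have hA : AdjR R (wv R u x1 p.val) (wv R u x1 q.val) := Or.inl hR'
        obtain ⟨k, hk, hck, hcases⟩ := hnbr p.val _ (by omega) hA
        have hq : (q : ℕ) = k := hinj2 q.val k (by omega) hk hck
        rcases hcases with h|h
        · refine ⟨p.val, by omega, Or.inl ⟨?_, rfl, by omega⟩⟩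
          have h2 : (q : ℕ) = (p : ℕ) + 1 := by omega
          rw [h2] at hR'
          exact decide_eq_true hR'
        · have h2 : (q : ℕ) + 1 = (p : ℕ) := by omega
          refine ⟨q.val, by omega, Or.inr ⟨?_, by omega, rfl⟩⟩
          apply decide_eq_false
          intro hcontra
          rw [h2] at hcontra
          have hne : wv R u x1 q.val ≠ wv R u x1 p.val := by
            intro he
            rw [he] at hcontra
            exact hirr _ hcontra
          exact hor _ _ hne ⟨hcontra, hR'⟩
    · -- degenerate: single vertex
      have hall : ∀ w : W, w = u := by
        intro w
        have h := hconn u w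
        induction h with
        | refl => rfl
        | @tail b c hub hbc ih =>
          rw [ih] at hbc
          exact absurd ⟨c, hbc⟩ hnb
      left
      refine ⟨0, fun _ => false,
        ⟨{ toFun := fun _ => u, invFun := fun _ => (0 : Fin 1),
           left_inv := fun i => by apply Fin.ext; omega,
           right_inv := fun w => (hall w).symm }, ?_⟩⟩
      intro p q
      constructor
      · rintro ⟨t, ht, _⟩; omega
      · intro hR
        exact absurd hR (hirr u)
  · -- cycle case
    push_neg at hone
    have hK : ∀ w : W, ∃ c c', AdjR R w c ∧ AdjR R w c' ∧ c ≠ c' := by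
      intro w
      obtain ⟨c, c', h⟩ := hone w
      exact ⟨c, c', h.1, h.2.1, h.2.2⟩
    obtain ⟨u⟩ := (inferInstance : Nonempty W)
    obtain ⟨c1, c2, hc1, hc2, hcc⟩ := hK u
    have halive : ∀ i, aliveW R u c1 i := by
      intro i
      induction i with
      | zero => unfold aliveW; rw [wv_zero, wv_one]; exact hc1
      | succ i ih =>
        obtain ⟨d1, d2, hd1, hd2, hdd⟩ := hK (wv R u c1 (i+1))
        have hex : ∃ d, AdjR R (wv R u c1 (i+1)) d ∧ d ≠ wv R u c1 i := by
          by_cases hcase : d1 = wv R u c1 i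
          · exact ⟨d2, hd2, by rw [← hcase]; exact fun he => hdd he.symm⟩
          · exact ⟨d1, hd1, hcase⟩
        have : aliveW R u c1 (i+1) := by
          unfold aliveW
          rw [wv_two]
          exact (wstep_adj hex).1
        exact this
    have hrep : ∃ j, ∃ i, i < j ∧ wv R u c1 i = wv R u c1 j := by
      obtain ⟨i, j, hne, he⟩ := Finite.exists_ne_map_eq_of_infinite (wv R u c1)
      rcases lt_trichotomy i j with h|h|h
      · exact ⟨j, i, h, he⟩
      · exact absurd h hne
      · exact ⟨i, j, h, he.symm⟩
    set m := Nat.find hrep with hmset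
    obtain ⟨i0, hi0, heq0⟩ := Nat.find_spec hrep
    have hmin : ∀ j' i', j' < m → i' < j' → wv R u c1 i' ≠ wv R u c1 j' := by
      intro j' i' hj' hi' he
      exact Nat.find_min hrep hj' ⟨i', hi', he⟩
    obtain ⟨hi00, hm3⟩ := first_repeat hirr htwo (fun t _ => halive t) hi0 heq0 hmin
    subst hi00
    have hwm : wv R u c1 m = u := by rw [← heq0, wv_zero]
    have hmpos : 0 < m := by omega
    have hinj2 : ∀ i j, i < m → j < m → wv R u c1 i = wv R u c1 j → i = j := by
      intro i j hi hj he
      rcases lt_trichotomy i j with h|h|h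
      · exact absurd he (fun he' => hmin j i hj h he')
      · exact h
      · exact absurd he.symm (fun he' => hmin i j hi h he')
    have hmod : ∀ s, s ≤ m → wv R u c1 (s % m) = wv R u c1 s := by
      intro s hs
      rcases eq_or_lt_of_le hs with rfl|h
      · rw [Nat.mod_self, wv_zero, hwm]
      · rw [Nat.mod_eq_of_lt h]
    have hmodne : ∀ i : ℕ, (i+1) % m ≠ (i+m-1) % m := by
      intro i he
      have h1 : (i + 1) % m = (i + (m-1)) % m := by rw [he]; congr 1; omega
      have h3 : (1 : ℕ) ≡ m - 1 [MOD m] := Nat.ModEq.add_left_cancel' i h1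
      have h4 : (2 : ℕ) ≡ m [MOD m] := by
        have := h3.add_right 1
        rw [show m - 1 + 1 = m by omega] at this
        exact this
      have h5 : (2 : ℕ) ≡ 0 [MOD m] :=
        h4.trans ((Nat.modEq_zero_iff_dvd).mpr dvd_rfl)
      have h6 : m ∣ 2 := (Nat.modEq_zero_iff_dvd).mp h5
      have := Nat.le_of_dvd (by norm_num) h6
      omega
    have hnbr : ∀ i c, i < m → AdjR R (wv R u c1 i) c →
        c = wv R u c1 ((i+1) % m) ∨ c = wv R u c1 ((i+m-1) % m) := by
      intro i c hi hc
      have hA1 : AdjR R (wv R u c1 i) (wv R u c1 ((i+1) % m)) := by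
        rw [hmod (i+1) (by omega)]
        exact halive i
      have hq : ((i+m-1) % m + 1) % m = i := by
        rw [Nat.mod_add_mod, show i + m - 1 + 1 = i + m by omega, Nat.add_mod_right,
          Nat.mod_eq_of_lt hi]
      have hA2 : AdjR R (wv R u c1 i) (wv R u c1 ((i+m-1) % m)) := by
        have ha := halive ((i+m-1) % m)
        unfold aliveW at ha
        rw [← hmod ((i+m-1) % m + 1) (by have := Nat.mod_lt (i+m-1) hmpos; omega), hq] at ha
        exact ha.symm
      have hd : wv R u c1 ((i+1) % m) ≠ wv R u c1 ((i+m-1) % m) := by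
        intro he
        exact hmodne i (hinj2 _ _ (Nat.mod_lt _ hmpos) (Nat.mod_lt _ hmpos) he)
      exact htwo _ _ _ hA1 hA2 hd c hc
    have hcover : ∀ w : W, ∃ i, i < m ∧ wv R u c1 i = w := by
      intro w
      have h := hconn u w
      induction h with
      | refl => exact ⟨0, hmpos, wv_zero R u c1⟩
      | @tail b c hub hbc ih =>
        obtain ⟨i, hi, hib⟩ := ih
        rw [← hib] at hbc
        rcases hnbr i c hi hbc with h|h
        · exact ⟨(i+1) % m, Nat.mod_lt _ hmpos, h.symm⟩
        · exact ⟨(i+m-1) % m, Nat.mod_lt _ hmpos, h.symm⟩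
    have hbij : Function.Bijective (fun i : Fin m => wv R u c1 i.val) := by
      constructor
      · intro i j h
        exact Fin.ext (hinj2 i.val j.val i.isLt j.isLt h)
      · intro w
        obtain ⟨i, hi, he⟩ := hcover w
        exact ⟨⟨i, hi⟩, he⟩
    right
    refine ⟨m, fun t => decide (R (wv R u c1 t) (wv R u c1 (t+1))), hm3,
      Equiv.ofBijective _ hbij, ?_⟩
    intro p q
    constructor
    · rintro ⟨t, ht, (⟨hσ, hx, hy⟩|⟨hσ, hx, hy⟩)⟩
      · have hR := of_decide_eq_true hσ
        show R (wv R u c1 p.val) (wv R u c1 q.val)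
        rw [hx, hy, hmod (t+1) (by omega)]
        exact hR
      · have hR := of_decide_eq_false hσ
        have hA : AdjR R (wv R u c1 t) (wv R u c1 (t+1)) := halive t
        show R (wv R u c1 p.val) (wv R u c1 q.val)
        rw [hx, hy, hmod (t+1) (by omega)]
        rcases hA with h|h
        · exact absurd h hR
        · exact h
    · intro hR
      have hR' : R (wv R u c1 p.val) (wv R u c1 q.val) := hR
      have hA : AdjR R (wv R u c1 p.val) (wv R u c1 q.val) := Or.inl hR'
      have hpm : (p : ℕ) < m := p.isLt
      rcases hnbr p.val _ hpm hA with h|h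
      · have hq : (q : ℕ) = ((p : ℕ) + 1) % m :=
          hinj2 q.val _ q.isLt (Nat.mod_lt _ hmpos) h
        refine ⟨p.val, hpm, Or.inl ⟨?_, rfl, hq⟩⟩
        have h2 : wv R u c1 q.val = wv R u c1 ((p : ℕ)+1) := by
          rw [h, hmod ((p:ℕ)+1) (by omega)]
        rw [h2] at hR'
        exact decide_eq_true hR'
      · have hq : (q : ℕ) = ((p : ℕ) + m - 1) % m :=
          hinj2 q.val _ q.isLt (Nat.mod_lt _ hmpos) h
        have hq1 : ((q : ℕ) + 1) % m = (p : ℕ) := by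
          rw [hq, Nat.mod_add_mod, show (p:ℕ) + m - 1 + 1 = (p:ℕ) + m by omega,
            Nat.add_mod_right, Nat.mod_eq_of_lt hpm]
        refine ⟨q.val, q.isLt, Or.inr ⟨?_, hq1.symm, rfl⟩⟩
        apply decide_eq_false
        intro hcontra
        have h3 : wv R u c1 ((q:ℕ)+1) = wv R u c1 p.val := by
          rw [← hmod ((q:ℕ)+1) (by omega), hq1]
        rw [h3] at hcontra
        have hne : wv R u c1 q.val ≠ wv R u c1 p.val := by
          intro he
          rw [he] at hcontra
          exact hirr _ hcontra
        exact hor _ _ hne ⟨hcontra, hR'⟩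

/-- Extraction of an alternating matching from a colouring of an oriented path. -/
theorem matchP (n : ℕ) (σ : ℕ → Bool) (f : Fin (n+1) → Fin 2)
    (hhom : IsHom (OPathRel n σ) T2r f) (hiot : IotInj (OPathRel n σ) f) :
    ∃ μ, PathAltMatching n σ μ := by
  classical
  set G : ℕ → ℕ := fun t => (f ⟨min t n, by omega⟩).val with hG
  have hb2 : ∀ s, G s < 2 := fun s => (f _).isLt
  have hGeq : ∀ t (ht : t ≤ n), G t = (f ⟨t, by omega⟩).val := by
    intro t ht
    have hmn : min t n = t := by omega
    simp only [hG, hmn]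
  have fact1 : ∀ t, t < n → (σ t = true → G t ≤ G (t+1)) ∧ (σ t = false → G (t+1) ≤ G t) := by
    intro t ht
    constructor
    · intro hσ
      have harc : OPathRel n σ ⟨t, by omega⟩ ⟨t+1, by omega⟩ := ⟨t, ht, Or.inl ⟨hσ, rfl, rfl⟩⟩
      have h2 := hhom _ _ harc
      rw [hGeq t (by omega), hGeq (t+1) (by omega)]
      exact h2
    · intro hσ
      have harc : OPathRel n σ ⟨t+1, by omega⟩ ⟨t, by omega⟩ := ⟨t, ht, Or.inr ⟨hσ, rfl, rfl⟩⟩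
      have h2 := hhom _ _ harc
      rw [hGeq t (by omega), hGeq (t+1) (by omega)]
      exact h2
  have fact2 : ∀ v, 1 ≤ v → v + 1 ≤ n → G (v-1) ≠ G (v+1) := by
    intro v hv1 hv2 he
    have hmem1 : (⟨v-1, by omega⟩ : Fin (n+1)) ∈
        ({y | OPathRel n σ y ⟨v, by omega⟩} ∪ {y | OPathRel n σ ⟨v, by omega⟩ y}) := by
      cases hσ : σ (v-1) with
      | true => exact Or.inl ⟨v-1, by omega, Or.inl ⟨hσ, rfl, by simp; omega⟩⟩
      | false => exact Or.inr ⟨v-1, by omega, Or.inr ⟨hσ, by simp; omega, rfl⟩⟩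
    have hmem2 : (⟨v+1, by omega⟩ : Fin (n+1)) ∈
        ({y | OPathRel n σ y ⟨v, by omega⟩} ∪ {y | OPathRel n σ ⟨v, by omega⟩ y}) := by
      cases hσ : σ v with
      | true => exact Or.inr ⟨v, by omega, Or.inl ⟨hσ, rfl, rfl⟩⟩
      | false => exact Or.inl ⟨v, by omega, Or.inr ⟨hσ, rfl, rfl⟩⟩
    have hfe : f ⟨v-1, by omega⟩ = f ⟨v+1, by omega⟩ := by
      apply Fin.ext
      rw [← hGeq (v-1) (by omega), ← hGeq (v+1) (by omega)]
      exact he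
    have := hiot ⟨v, by omega⟩ hmem1 hmem2 hfe
    simp only [Fin.mk.injEq] at this
    omega
  refine ⟨fun t => t < n ∧ G t ≠ G (t+1), ?_, ?_, ?_, ?_⟩
  · exact fun t ht => ht.1
  · rintro t ⟨⟨ht, h1⟩, ⟨ht2, h2⟩⟩
    have h2b : G (t+1) ≠ G (t+2) := h2
    have b1 := hb2 t; have b2 := hb2 (t+1); have b3 := hb2 (t+2)
    have h3 : G t = G (t+2) := by omega
    apply fact2 (t+1) (by omega) (by omega)
    rw [show t+1-1 = t by omega]
    exact h3
  · intro v hv1 hv2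
    by_contra hcon
    push_neg at hcon
    obtain ⟨h1, h2⟩ := hcon
    have e1 : G (v-1) = G ((v-1)+1) := by
      by_contra hc
      exact hc (h1 (by omega))
    have e2 : G v = G (v+1) := by
      by_contra hc
      exact hc (h2 (by omega))
    rw [show v - 1 + 1 = v by omega] at e1
    exact fact2 v hv1 hv2 (by omega)
  · rintro t t' ⟨htn, hne⟩ ⟨htn', hne'⟩ htt hgap
    have chain : ∀ u, t+1 ≤ u → u ≤ t' → G (t+1) = G u := by
      intro u hu1 hu2
      induction u, hu1 using Nat.le_induction with
      | base => rfl
      | succ u hu ih =>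
        have h3 : G u = G (u+1) := by
          by_contra hc
          exact hgap u (by omega) (by omega) ⟨by omega, hc⟩
        rw [← h3]
        exact ih (by omega)
    have hch : G (t+1) = G t' := chain t' (by omega) (by omega)
    intro heqσ
    cases hb : σ t with
    | true =>
      have hb' : σ t' = true := by rw [← heqσ, hb]
      have c1 := (fact1 t htn).1 hb
      have c2 := (fact1 t' htn').1 hb'
      have := hb2 t; have := hb2 (t+1); have := hb2 t'; have := hb2 (t'+1)
      omega
    | false =>
      have hb' : σ t' = false := by rw [← heqσ, hb]
      have c1 := (fact1 t htn).2 hb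
      have c2 := (fact1 t' htn').2 hb'
      have := hb2 t; have := hb2 (t+1); have := hb2 t'; have := hb2 (t'+1)
      omega

/-- Extraction of an alternating matching from a colouring of an oriented cycle. -/
theorem matchC (m : ℕ) (hm : 3 ≤ m) (σ : ℕ → Bool) (f : Fin m → Fin 2)
    (hhom : IsHom (OCycRel m σ) T2r f) (hiot : IotInj (OCycRel m σ) f) :
    ∃ k μ, 1 ≤ k ∧ m = 4 * k ∧ CycAltMatching m σ μ := by
  classical
  have hmpos : 0 < m := by omega
  set G : ℕ → ℕ := fun t => (f ⟨t % m, Nat.mod_lt _ hmpos⟩).val with hG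
  have hb2 : ∀ s, G s < 2 := fun s => (f _).isLt
  have hGmod : ∀ s, G (s % m) = G s := by
    intro s
    have h : s % m % m = s % m := Nat.mod_mod_of_dvd s dvd_rfl
    simp only [hG, h]
  have hGcongr : ∀ a b, a % m = b % m → G a = G b := by
    intro a b h
    rw [← hGmod a, ← hGmod b, h]
  have hGeq : ∀ t (ht : t < m), G t = (f ⟨t, ht⟩).val := by
    intro t ht
    have h : t % m = t := Nat.mod_eq_of_lt ht
    simp only [hG, h]
  have hmm : ∀ a b : ℕ, (a % m + b) % m = (a + b) % m := fun a b => Nat.mod_add_mod a m b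
  have hmodne : ∀ i : ℕ, (i+1) % m ≠ (i+m-1) % m := by
    intro i he
    have h1 : (i + 1) % m = (i + (m-1)) % m := by rw [he]; congr 1; omega
    have h3 : (1 : ℕ) ≡ m - 1 [MOD m] := Nat.ModEq.add_left_cancel' i h1
    have h4 : (2 : ℕ) ≡ m [MOD m] := by
      have := h3.add_right 1
      rw [show m - 1 + 1 = m by omega] at this
      exact this
    have h5 : (2 : ℕ) ≡ 0 [MOD m] := h4.trans ((Nat.modEq_zero_iff_dvd).mpr dvd_rfl)
    have h6 : m ∣ 2 := (Nat.modEq_zero_iff_dvd).mp h5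
    have := Nat.le_of_dvd (by norm_num) h6
    omega
  have I3 : ∀ v, ((v + m - 1) % m + 1) % m = v % m := by
    intro v
    rw [hmm, show v + m - 1 + 1 = v + m by omega, Nat.add_mod_right]
  have I2 : ∀ t, ((t+1) % m + m - 1) % m = t % m := by
    intro t
    rw [show (t+1) % m + m - 1 = (t+1) % m + (m-1) by omega, hmm,
      show t + 1 + (m-1) = t + m by omega, Nat.add_mod_right]
  have cfact1 : ∀ t, t < m → (σ t = true → G t ≤ G (t+1)) ∧ (σ t = false → G (t+1) ≤ G t) := by
    intro t ht
    have hy : G (t+1) = (f ⟨(t+1) % m, Nat.mod_lt _ hmpos⟩).val := by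
      rw [← hGmod (t+1)]
      exact hGeq _ _
    constructor
    · intro hσ
      have harc : OCycRel m σ ⟨t, ht⟩ ⟨(t+1) % m, Nat.mod_lt _ hmpos⟩ :=
        ⟨t, ht, Or.inl ⟨hσ, rfl, rfl⟩⟩
      have h2 := hhom _ _ harc
      rw [hGeq t ht, hy]
      exact h2
    · intro hσ
      have harc : OCycRel m σ ⟨(t+1) % m, Nat.mod_lt _ hmpos⟩ ⟨t, ht⟩ :=
        ⟨t, ht, Or.inr ⟨hσ, rfl, rfl⟩⟩
      have h2 := hhom _ _ harc
      rw [hGeq t ht, hy]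
      exact h2
  have cfact2 : ∀ v, v < m → G (v + m - 1) ≠ G (v + 1) := by
    intro v hv he
    set t1 := (v + m - 1) % m with ht1def
    have ht1 : t1 < m := Nat.mod_lt _ hmpos
    have ht1v : (t1 + 1) % m = v := by rw [ht1def, I3, Nat.mod_eq_of_lt hv]
    have hmem1 : (⟨t1, ht1⟩ : Fin m) ∈
        ({y | OCycRel m σ y ⟨v, hv⟩} ∪ {y | OCycRel m σ ⟨v, hv⟩ y}) := by
      cases hσ : σ t1 with
      | true => exact Or.inl ⟨t1, ht1, Or.inl ⟨hσ, rfl, ht1v.symm⟩⟩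
      | false => exact Or.inr ⟨t1, ht1, Or.inr ⟨hσ, ht1v.symm, rfl⟩⟩
    have hmem2 : (⟨(v+1) % m, Nat.mod_lt _ hmpos⟩ : Fin m) ∈
        ({y | OCycRel m σ y ⟨v, hv⟩} ∪ {y | OCycRel m σ ⟨v, hv⟩ y}) := by
      cases hσ : σ v with
      | true => exact Or.inr ⟨v, hv, Or.inl ⟨hσ, rfl, rfl⟩⟩
      | false => exact Or.inl ⟨v, hv, Or.inr ⟨hσ, rfl, rfl⟩⟩
    have hfe : f ⟨t1, ht1⟩ = f ⟨(v+1) % m, Nat.mod_lt _ hmpos⟩ := by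
      apply Fin.ext
      rw [← hGeq t1 ht1, ← hGeq _ (Nat.mod_lt _ hmpos), ht1def, hGmod, hGmod]
      exact he
    have heq2 := hiot ⟨v, hv⟩ hmem1 hmem2 hfe
    simp only [Fin.mk.injEq] at heq2
    apply hmodne v
    rw [← heq2, ht1def]
  set μ : ℕ → Prop := fun t => t < m ∧ G t ≠ G (t+1) with hμdef
  have hc1 : ∀ t, μ t → t < m := fun t ht => ht.1
  have hc2 : ∀ t, t < m → ¬(μ t ∧ μ ((t + 1) % m)) := by
    rintro t ht ⟨⟨_, h1⟩, ⟨_, h2⟩⟩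
    have e1 : G ((t+1) % m) = G (t+1) := hGmod _
    have e2 : G ((t+1) % m + 1) = G (t+2) := hGcongr _ _ (by rw [hmm])
    rw [e1, e2] at h2
    have b1 := hb2 t; have b2 := hb2 (t+1); have b3 := hb2 (t+2)
    have h3 : G t = G (t+2) := by omega
    apply cfact2 ((t+1) % m) (Nat.mod_lt _ hmpos)
    have e3 : G ((t+1) % m + m - 1) = G t := by
      apply hGcongr
      rw [I2, Nat.mod_eq_of_lt ht]
    have e4 : G ((t+1) % m + 1) = G (t+2) := e2
    rw [e3, e4]
    exact h3
  have hc3 : ∀ v, v < m → (μ v ∨ μ ((v + m - 1) % m)) := by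
    intro v hv
    by_contra hcon
    push_neg at hcon
    obtain ⟨h1, h2⟩ := hcon
    have e1 : G v = G (v+1) := by
      by_contra hc
      exact h1 ⟨hv, hc⟩
    have e2 : G ((v+m-1) % m) = G ((v+m-1) % m + 1) := by
      by_contra hc
      exact h2 ⟨Nat.mod_lt _ hmpos, hc⟩
    have e3 : G ((v+m-1) % m) = G (v+m-1) := hGmod _
    have e4 : G ((v+m-1) % m + 1) = G v := by
      apply hGcongr
      rw [I3]
    rw [e3, e4] at e2
    exact cfact2 v hv (by omega)
  have hc4 : ∀ t d, t < m → 0 < d → d < m → μ t → μ ((t + d) % m) →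
      (∀ s, 0 < s → s < d → ¬ μ ((t + s) % m)) → σ t ≠ σ ((t + d) % m) := by
    intro t d ht hd0 hdm hμt hμtd hgap
    have chain : ∀ s, 1 ≤ s → s ≤ d → G (t+1) = G (t+s) := by
      intro s hs1 hs2
      induction s, hs1 using Nat.le_induction with
      | base => rfl
      | succ s hs ih =>
        have hnμ : ¬ μ ((t + s) % m) := hgap s (by omega) (by omega)
        have e1 : G ((t+s) % m) = G ((t+s) % m + 1) := by
          by_contra hc
          exact hnμ ⟨Nat.mod_lt _ hmpos, hc⟩
        have e2 : G ((t+s) % m) = G (t+s) := hGmod _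
        have e3 : G ((t+s) % m + 1) = G (t+s+1) := hGcongr _ _ (by rw [hmm])
        rw [e2, e3] at e1
        rw [show t + (s + 1) = t + s + 1 from rfl, ← e1]
        exact ih (by omega)
    obtain ⟨htm, hne⟩ := hμt
    obtain ⟨hem, hne'⟩ := hμtd
    have hch : G (t+1) = G (t+d) := chain d (by omega) le_rfl
    have eE : G ((t+d) % m) = G (t+d) := hGmod _
    have eE1 : G ((t+d) % m + 1) = G (t+d+1) := hGcongr _ _ (by rw [hmm])
    rw [eE, eE1] at hne'
    intro heqσ
    cases hb : σ t with
    | true =>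
      have hb' : σ ((t+d) % m) = true := by rw [← heqσ, hb]
      have c1 := (cfact1 t ht).1 hb
      have c2' := (cfact1 ((t+d) % m) (Nat.mod_lt _ hmpos)).1 hb'
      rw [eE, eE1] at c2'
      have := hb2 t; have := hb2 (t+1); have := hb2 (t+d); have := hb2 (t+d+1)
      omega
    | false =>
      have hb' : σ ((t+d) % m) = false := by rw [← heqσ, hb]
      have c1 := (cfact1 t ht).2 hb
      have c2' := (cfact1 ((t+d) % m) (Nat.mod_lt _ hmpos)).2 hb'
      rw [eE, eE1] at c2'
      have := hb2 t; have := hb2 (t+1); have := hb2 (t+d); have := hb2 (t+d+1)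
      omega
  -- parity of the matching: edges alternate around the cycle
  have hflip : ∀ t, t < m → (μ t ↔ ¬ μ ((t+1) % m)) := by
    intro t ht
    constructor
    · intro h1 h2
      exact hc2 t ht ⟨h1, h2⟩
    · intro h1
      rcases hc3 ((t+1) % m) (Nat.mod_lt _ hmpos) with h | h
      · exact absurd h h1
      · have e : ((t+1) % m + m - 1) % m = t := by rw [I2, Nat.mod_eq_of_lt ht]
        rw [e] at h
        exact h
  obtain ⟨t0, ht0m, hμt0⟩ : ∃ t0, t0 < m ∧ μ t0 := by
    rcases hc3 0 hmpos with h | h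
    · exact ⟨0, hmpos, h⟩
    · exact ⟨(0 + m - 1) % m, Nat.mod_lt _ hmpos, h⟩
  have hpar : ∀ j, μ ((t0 + j) % m) ↔ (j % 2 = 0) := by
    intro j
    induction j with
    | zero =>
      show μ (t0 % m) ↔ (0 % 2 = 0)
      rw [Nat.mod_eq_of_lt ht0m]
      exact ⟨fun _ => rfl, fun _ => hμt0⟩
    | succ j ih =>
      have hf := hflip ((t0 + j) % m) (Nat.mod_lt _ hmpos)
      rw [hmm] at hf
      have hstep : μ ((t0 + j + 1) % m) ↔ ¬ μ ((t0 + j) % m) :=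
        ⟨fun h hj => (hf.mp hj) h, fun h => by by_contra hn; exact h (hf.mpr hn)⟩
      rw [show t0 + (j+1) = t0 + j + 1 from rfl, hstep, ih]
      omega
  have heven : m % 2 = 0 := by
    have h : μ ((t0 + m) % m) := by
      rw [Nat.add_mod_right, Nat.mod_eq_of_lt ht0m]
      exact hμt0
    exact (hpar m).mp h
  have hmatch : ∀ j, μ ((t0 + 2*j) % m) := fun j => (hpar (2*j)).mpr (by omega)
  have hnomatch : ∀ j, ¬ μ ((t0 + 2*j + 1) % m) := by
    intro j hcon
    have := (hpar (2*j+1)).mp hcon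
    omega
  have h2m : 2 < m := by omega
  have hsig : ∀ j, σ ((t0 + 2*j) % m) = (if j % 2 = 0 then σ t0 else ! (σ t0)) := by
    intro j
    induction j with
    | zero =>
      simp [Nat.mod_eq_of_lt ht0m]
    | succ j ih =>
      set t := (t0 + 2*j) % m with htdef
      have ht : t < m := Nat.mod_lt _ hmpos
      have hμt : μ t := hmatch j
      have he2 : (t + 2) % m = (t0 + 2*(j+1)) % m := by
        rw [htdef, hmm, show t0 + 2*j + 2 = t0 + 2*(j+1) by ring]
      have hμt2 : μ ((t + 2) % m) := by
        rw [he2]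
        exact hmatch (j+1)
      have hgap : ∀ s, 0 < s → s < 2 → ¬ μ ((t + s) % m) := by
        intro s hs1 hs2
        have hs : s = 1 := by omega
        subst hs
        have he1 : (t + 1) % m = (t0 + 2*j + 1) % m := by rw [htdef, hmm]
        rw [he1]
        exact hnomatch j
      have hneq := hc4 t 2 ht (by omega) h2m hμt hμt2 hgap
      rw [he2] at hneq
      rw [ih] at hneq
      by_cases hj : j % 2 = 0
      · rw [if_pos hj] at hneq
        rw [if_neg (by omega)]
        cases hσ0 : σ t0 <;> cases hσn : σ ((t0 + 2*(j+1)) % m) <;>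
          first
          | rfl
          | (rw [hσ0, hσn] at hneq; simp at hneq)
      · rw [if_neg hj] at hneq
        rw [if_pos (by omega)]
        cases hσ0 : σ t0 <;> cases hσn : σ ((t0 + 2*(j+1)) % m) <;>
          first
          | rfl
          | (rw [hσ0, hσn] at hneq; simp at hneq)
  have hdiv : m % 4 = 0 := by
    by_contra hm4
    have hc : m / 2 % 2 = 1 := by omega
    have := hsig (m / 2)
    rw [show t0 + 2 * (m / 2) = t0 + m by omega, Nat.add_mod_right,
      Nat.mod_eq_of_lt ht0m, if_neg (by omega)] at this
    cases h : σ t0 <;> rw [h] at this <;> simp at this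
  refine ⟨m / 4, μ, by omega, by omega, hc1, hc2, hc3, hc4⟩

/-- Construction of a colouring from an alternating matching on a path. -/
theorem revP (n : ℕ) (σ : ℕ → Bool) (μ : ℕ → Prop) (h : PathAltMatching n σ μ) :
    ∃ f : Fin (n+1) → Fin 2, IsHom (OPathRel n σ) T2r f ∧ IotInj (OPathRel n σ) f := by
  classical
  obtain ⟨h1, h2, h3, h4⟩ := h
  -- colours of the two endpoints of a matched edge t
  set cL : ℕ → Fin 2 := fun t => if σ t then 0 else 1 with hcL
  set cR : ℕ → Fin 2 := fun t => if σ t then 1 else 0 with hcR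
  have hLR : ∀ t, cL t ≠ cR t := by
    intro t
    by_cases hσ : σ t <;> simp [hcL, hcR, hσ]
  set F : ℕ → Fin 2 := fun v =>
    if μ v then cL v
    else if 1 ≤ v ∧ μ (v-1) then cR (v-1)
    else if μ (v+1) then cL (v+1)
    else if 2 ≤ v ∧ μ (v-2) then cR (v-2)
    else 0 with hF
  have hFL : ∀ v, μ v → F v = cL v := by
    intro v hv
    simp only [hF, if_pos hv]
  have hFR : ∀ v, 1 ≤ v → μ (v-1) → F v = cR (v-1) := by
    intro v hv1 hv
    have hnv : ¬ μ v := by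
      intro hμv
      exact h2 (v-1) ⟨hv, by rw [show v - 1 + 1 = v by omega]; exact hμv⟩
    simp only [hF, if_neg hnv, if_pos (⟨hv1, hv⟩ : 1 ≤ v ∧ μ (v-1))]
  -- main edge lemma
  have hedge : ∀ t, t < n →
      (μ t → F t = cL t ∧ F (t+1) = cR t) ∧ (¬ μ t → F t = F (t+1)) := by
    intro t ht
    constructor
    · intro hμt
      exact ⟨hFL t hμt, by rw [hFR (t+1) (by omega) (by simpa using hμt)]; simp⟩
    · intro hnμt
      rcases Nat.eq_zero_or_pos t with rfl | htpos
      · -- t = 0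
        by_cases hμ1 : μ 1
        · rw [hFL 1 hμ1]
          simp only [hF, if_neg hnμt]
          rw [if_neg (by omega : ¬ (1 ≤ 0 ∧ μ (0-1)))]
          rw [if_pos hμ1]
        · have hn1 : n = 1 := by
            by_contra hn
            rcases h3 1 (by omega) (by omega) with hc | hc
            · exact hnμt (by simpa using hc)
            · exact hμ1 hc
          have hF0 : F 0 = 0 := by
            simp only [hF, if_neg hnμt]
            rw [if_neg (by omega : ¬ (1 ≤ 0 ∧ μ (0-1))), if_neg (by simpa using hμ1),
              if_neg (by omega : ¬ (2 ≤ 0 ∧ μ (0-2)))]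
          have hF1 : F 1 = 0 := by
            have hnμ1 : ¬ μ 1 := hμ1
            have hnμ2 : ¬ μ 2 := fun hc => by have := h1 2 hc; omega
            simp only [hF, if_neg hnμ1]
            rw [if_neg (fun hc => hnμt hc.2 : ¬ (1 ≤ 1 ∧ μ (1-1))),
              if_neg (by simpa using hnμ2), if_neg (by omega : ¬ (2 ≤ 1 ∧ μ (1-2)))]
          rw [hF0, hF1]
      · -- t ≥ 1
        have hμt1 : μ (t-1) := by
          rcases h3 t (by omega) (by omega) with hc | hc
          · exact hc
          · exact absurd hc hnμt
        rw [hFR t htpos hμt1]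
        by_cases hμt2 : μ (t+1)
        · rw [hFL (t+1) hμt2]
          have halt := h4 (t-1) (t+1) hμt1 hμt2 (by omega)
            (fun s hs1 hs2 => by rw [show s = t by omega]; exact hnμt)
          by_cases hσ : σ (t-1)
          · have hσ' : σ (t+1) = false := by
              cases hb : σ (t+1)
              · rfl
              · exact absurd (hσ.trans hb.symm) halt
            simp [hcL, hcR, hσ, hσ']
          · have hσf : σ (t-1) = false := Bool.eq_false_iff.mpr hσ
            have hσ' : σ (t+1) = true := by
              cases hb : σ (t+1)
              · exact absurd (hσf.trans hb.symm) halt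
              · rfl
            simp [hcL, hcR, hσf, hσ']
        · -- F (t+1) via fourth branch
          have hnμ0 : ¬ μ (t+1) := hμt2
          have hnμb : ¬ (1 ≤ t+1 ∧ μ (t+1-1)) := by
            intro hc
            exact hnμt (by simpa using hc.2)
          have hnμc : ¬ μ (t+2) := by
            intro hc
            have hlt := h1 (t+2) hc
            rcases h3 (t+1) (by omega) (by omega) with hd | hd
            · exact hnμt (by simpa using hd)
            · exact hμt2 hd
          simp only [hF, if_neg hnμ0, if_neg hnμb, if_neg hnμc]
          rw [if_pos (⟨by omega, by simpa using hμt1⟩ : 2 ≤ t+1 ∧ μ (t+1-2))]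
          rfl
  refine ⟨fun p => F p.val, ?_, ?_⟩
  · -- homomorphism
    rintro p q ⟨t, ht, (⟨hσ, hx, hy⟩|⟨hσ, hx, hy⟩)⟩
    · show F p.val ≤ F q.val
      rw [hx, hy]
      by_cases hμt : μ t
      · obtain ⟨e1, e2⟩ := (hedge t ht).1 hμt
        rw [e1, e2]
        simp [hcL, hcR, hσ]
      · rw [(hedge t ht).2 hμt]
    · show F p.val ≤ F q.val
      rw [hx, hy]
      by_cases hμt : μ t
      · obtain ⟨e1, e2⟩ := (hedge t ht).1 hμt
        rw [e1, e2]
        simp [hcL, hcR, hσ]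
      · rw [(hedge t ht).2 hμt]
  · -- iot-injectivity
    intro p y hy z hz hyz
    have hnbr : ∀ w : Fin (n+1),
        (w ∈ ({y | OPathRel n σ y p} ∪ {y | OPathRel n σ p y})) →
        ((w : ℕ) + 1 = (p : ℕ) ∧ (w : ℕ) < n) ∨ ((w : ℕ) = (p : ℕ) + 1 ∧ (p : ℕ) < n) := by
      rintro w (⟨t, ht, (⟨_, hx, hyy⟩|⟨_, hx, hyy⟩)⟩|⟨t, ht, (⟨_, hx, hyy⟩|⟨_, hx, hyy⟩)⟩)
      · left; omega
      · right; omega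
      · right; omega
      · left; omega
    have hdiff : (p : ℕ) ≥ 1 → (p : ℕ) + 1 ≤ n → F ((p : ℕ) - 1) ≠ F ((p : ℕ) + 1) := by
      intro hp1 hp2 heq
      set v : ℕ := (p : ℕ)
      rcases h3 v hp1 hp2 with hc | hc
      · obtain ⟨e1, e2⟩ := (hedge (v-1) (by omega)).1 hc
        rw [show v - 1 + 1 = v by omega] at e2
        have hnv : ¬ μ v := by
          intro hμv
          exact h2 (v-1) ⟨hc, by rw [show v - 1 + 1 = v by omega]; exact hμv⟩
        have e3 : F v = F (v+1) := (hedge v (by omega)).2 hnv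
        rw [e1, ← e3, e2] at heq
        exact hLR (v-1) heq
      · obtain ⟨e1, e2⟩ := (hedge v (by omega)).1 hc
        have hnv : ¬ μ (v-1) := by
          intro hμv
          exact h2 (v-1) ⟨hμv, by rw [show v - 1 + 1 = v by omega]; exact hc⟩
        have e3 : F (v-1) = F v := by
          have := (hedge (v-1) (by omega)).2 hnv
          rw [show v - 1 + 1 = v by omega] at this
          exact this
        rw [e3, e1, e2] at heq
        exact hLR v heq
    rcases hnbr y hy with ⟨hy1, hy2⟩ | ⟨hy1, hy2⟩ <;> rcases hnbr z hz with ⟨hz1, hz2⟩ | ⟨hz1, hz2⟩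
    · exact Fin.ext (by omega)
    · exfalso
      apply hdiff (by omega) (by omega)
      rw [show (p:ℕ) - 1 = (y:ℕ) by omega, show (p:ℕ) + 1 = (z:ℕ) by omega]
      exact hyz
    · exfalso
      apply hdiff (by omega) (by omega)
      rw [show (p:ℕ) - 1 = (z:ℕ) by omega, show (p:ℕ) + 1 = (y:ℕ) by omega]
      exact hyz.symm
    · exact Fin.ext (by omega)

/-- Construction of a colouring from an alternating matching on a cycle. -/
theorem revC (m : ℕ) (σ : ℕ → Bool) (μ : ℕ → Prop) (hm : 4 ≤ m) (h : CycAltMatching m σ μ) :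
    ∃ f : Fin m → Fin 2, IsHom (OCycRel m σ) T2r f ∧ IotInj (OCycRel m σ) f := by
  classical
  obtain ⟨c1, c2, c3, c4⟩ := h
  have hmpos : 0 < m := by omega
  have hmm : ∀ a b : ℕ, (a % m + b) % m = (a + b) % m := fun a b => Nat.mod_add_mod a m b
  have I3 : ∀ v, ((v + m - 1) % m + 1) % m = v % m := by
    intro v
    rw [hmm, show v + m - 1 + 1 = v + m by omega, Nat.add_mod_right]
  have I2 : ∀ t, ((t+1) % m + m - 1) % m = t % m := by
    intro t
    rw [show (t+1) % m + m - 1 = (t+1) % m + (m-1) by omega, hmm,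
      show t + 1 + (m-1) = t + m by omega, Nat.add_mod_right]
  set cL : ℕ → Fin 2 := fun t => if σ t then 0 else 1 with hcL
  set cR : ℕ → Fin 2 := fun t => if σ t then 1 else 0 with hcR
  have hLR : ∀ t, cL t ≠ cR t := by
    intro t
    by_cases hσ : σ t <;> simp [hcL, hcR, hσ]
  have honeb : ∀ v, v < m → ¬(μ ((v + m - 1) % m) ∧ μ v) := by
    intro v hv hc
    have ht : (v + m - 1) % m < m := Nat.mod_lt _ hmpos
    have he : ((v + m - 1) % m + 1) % m = v := by rw [I3, Nat.mod_eq_of_lt hv]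
    exact c2 _ ht ⟨hc.1, by rw [he]; exact hc.2⟩
  set F : ℕ → Fin 2 := fun v =>
    if μ (v % m) then cL (v % m) else cR ((v % m + m - 1) % m) with hF
  have hFL : ∀ v, v < m → μ v → F v = cL v := by
    intro v hv hμv
    have he : v % m = v := Nat.mod_eq_of_lt hv
    simp only [hF, he, if_pos hμv]
  have hFR : ∀ v, v < m → ¬ μ v → F v = cR ((v + m - 1) % m) := by
    intro v hv hμv
    have he : v % m = v := Nat.mod_eq_of_lt hv
    simp only [hF, he, if_neg hμv]
  have hedge : ∀ t, t < m →
      (μ t → F t = cL t ∧ F ((t+1) % m) = cR t) ∧ (¬ μ t → F t = F ((t+1) % m)) := by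
    intro t ht
    have hwlt : (t+1) % m < m := Nat.mod_lt _ hmpos
    have hwm1 : ((t+1) % m + m - 1) % m = t := by rw [I2, Nat.mod_eq_of_lt ht]
    constructor
    · intro hμt
      refine ⟨hFL t ht hμt, ?_⟩
      have hnw : ¬ μ ((t+1) % m) := fun hc => c2 t ht ⟨hμt, hc⟩
      rw [hFR _ hwlt hnw, hwm1]
    · intro hnμt
      have hq : μ ((t + m - 1) % m) := by
        rcases c3 t ht with hc | hc
        · exact absurd hc hnμt
        · exact hc
      have hw : μ ((t+1) % m) := by
        rcases c3 ((t+1) % m) hwlt with hc | hc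
        · exact hc
        · rw [hwm1] at hc
          exact absurd hc hnμt
      set q := (t + m - 1) % m with hqdef
      have hqlt : q < m := Nat.mod_lt _ hmpos
      have hq1 : (q + 1) % m = t := by rw [hqdef, I3, Nat.mod_eq_of_lt ht]
      have hq2 : (q + 2) % m = (t + 1) % m := by
        rw [show q + 2 = q + 1 + 1 from rfl, ← hmm (q+1) 1, hq1]
      have halt := c4 q 2 hqlt (by omega) (by omega) hq (by rw [hq2]; exact hw)
        (fun s hs1 hs2 => by rw [show s = 1 by omega, hq1]; exact hnμt)
      rw [hq2] at halt
      rw [hFR t ht hnμt, ← hqdef, hFL _ hwlt hw]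
      by_cases hσ : σ q
      · have hσ' : σ ((t+1) % m) = false := by
          cases hb : σ ((t+1) % m)
          · rfl
          · exact absurd (hσ.trans hb.symm) halt
        simp [hcL, hcR, hσ, hσ']
      · have hσf : σ q = false := Bool.eq_false_iff.mpr hσ
        have hσ' : σ ((t+1) % m) = true := by
          cases hb : σ ((t+1) % m)
          · exact absurd (hσf.trans hb.symm) halt
          · rfl
        simp [hcL, hcR, hσf, hσ']
  refine ⟨fun p => F p.val, ?_, ?_⟩
  · rintro p q ⟨t, ht, (⟨hσ, hx, hy⟩|⟨hσ, hx, hy⟩)⟩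
    · show F p.val ≤ F q.val
      rw [hx, hy]
      by_cases hμt : μ t
      · obtain ⟨e1, e2⟩ := (hedge t ht).1 hμt
        rw [e1, e2]
        simp [hcL, hcR, hσ]
      · rw [(hedge t ht).2 hμt]
    · show F p.val ≤ F q.val
      rw [hx, hy]
      by_cases hμt : μ t
      · obtain ⟨e1, e2⟩ := (hedge t ht).1 hμt
        rw [e1, e2]
        simp [hcL, hcR, hσ]
      · rw [(hedge t ht).2 hμt]
  · intro p y hy z hz hyz
    have hplt : (p : ℕ) < m := p.isLt
    have hnbr : ∀ w : Fin m,
        (w ∈ ({y | OCycRel m σ y p} ∪ {y | OCycRel m σ p y})) →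
        ((w : ℕ) = ((p : ℕ) + 1) % m ∨ (w : ℕ) = ((p : ℕ) + m - 1) % m) := by
      have hback : ∀ t, t < m → ((p : ℕ) = (t+1) % m) → t = ((p : ℕ) + m - 1) % m := by
        intro t ht he
        rw [he, I2, Nat.mod_eq_of_lt ht]
      rintro w (⟨t, ht, (⟨_, hx, hyy⟩|⟨_, hx, hyy⟩)⟩|⟨t, ht, (⟨_, hx, hyy⟩|⟨_, hx, hyy⟩)⟩)
      · right
        rw [hx, ← hback t ht hyy]
      · left
        rw [hyy, hx]
      · left
        rw [hyy, hx]
      · right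
        rw [hyy, ← hback t ht hx]
    have hdiff : F (((p : ℕ) + m - 1) % m) ≠ F (((p : ℕ) + 1) % m) := by
      set q := ((p : ℕ) + m - 1) % m with hqdef
      have hqlt : q < m := Nat.mod_lt _ hmpos
      have hq1 : (q + 1) % m = (p : ℕ) := by rw [hqdef, I3, Nat.mod_eq_of_lt hplt]
      rcases c3 (p : ℕ) hplt with hc | hc
      · -- μ p
        have hnq : ¬ μ q := fun hcq => honeb _ hplt ⟨hcq, hc⟩
        have e1 : F q = F ((q+1) % m) := (hedge q hqlt).2 hnq
        rw [hq1] at e1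
        obtain ⟨e2, e3⟩ := (hedge (p : ℕ) hplt).1 hc
        rw [e1, e2, e3]
        exact hLR _
      · -- μ q
        have hnp : ¬ μ (p : ℕ) := fun hcq => honeb _ hplt ⟨hc, hcq⟩
        obtain ⟨e1, e2⟩ := (hedge q hqlt).1 hc
        rw [hq1] at e2
        have e3 : F (p : ℕ) = F (((p : ℕ)+1) % m) := (hedge (p : ℕ) hplt).2 hnp
        rw [e1, ← e3, e2]
        exact hLR q
    rcases hnbr y hy with hy1 | hy1 <;> rcases hnbr z hz with hz1 | hz1
    · exact Fin.ext (by rw [hy1, hz1])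
    · exfalso
      apply hdiff
      rw [← hy1, ← hz1]
      exact hyz.symm
    · exfalso
      apply hdiff
      rw [← hy1, ← hz1]
      exact hyz
    · exact Fin.ext (by rw [hy1, hz1])

lemma iso_symm {A B : Type} {R : A → A → Prop} {S : B → B → Prop} (h : IsoRel R S) :
    IsoRel S R := by
  obtain ⟨e, he⟩ := h
  exact ⟨e.symm, fun p q => by
    have := he (e.symm p) (e.symm q)
    simpa using this.symm⟩

/-- Pulling back a colouring along an isomorphism. -/
lemma iso_pull {A B : Type} {R : A → A → Prop} {S : B → B → Prop} (h : IsoRel R S)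
    (g : B → Fin 2) (hh : IsHom S T2r g) (hi : IotInj S g) :
    ∃ g' : A → Fin 2, IsHom R T2r g' ∧ IotInj R g' := by
  obtain ⟨e, he⟩ := h
  refine ⟨fun p => g (e p), fun p q hpq => hh _ _ ((he p q).1 hpq), fun p => ?_⟩
  intro y hy z hz hyz
  have hmem : ∀ w, w ∈ ({y | R y p} ∪ {y | R p y}) → (e w) ∈ ({y | S y (e p)} ∪ {y | S (e p) y}) := by
    rintro w (hw | hw)
    · exact Or.inl ((he w p).1 hw)
    · exact Or.inr ((he p w).1 hw)
  exact e.injective ((hi (e p)) (hmem y hy) (hmem z hz) hyz)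

lemma uconn_single {V : Type} {E : V → V → Prop} {a b : V} (h : E a b ∨ E b a) :
    UConn E a b := Relation.ReflTransGen.single h

lemma uconn_symm {V : Type} {E : V → V → Prop} {a b : V} (h : UConn E a b) :
    UConn E b a := by
  induction h with
  | refl => exact Relation.ReflTransGen.refl
  | tail _ hbc ih => exact Relation.ReflTransGen.trans (uconn_single (Or.symm hbc)) ih

/-- The component of `x` is connected as a graph in its own right. -/
lemma comp_conn {V : Type} (E : V → V → Prop) (x : V) :
    ∀ p q : {y // UConn E x y}, UConn (componentRel E x) p q := by
  have lift : ∀ (y : V) (h : UConn E x y),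
      UConn (componentRel E x) ⟨x, Relation.ReflTransGen.refl⟩ ⟨y, h⟩ := by
    intro y h
    induction h with
    | refl => exact Relation.ReflTransGen.refl
    | @tail c d hxc hcd ih =>
        refine Relation.ReflTransGen.tail ih ?_
        rcases hcd with h1 | h1
        · exact Or.inl h1
        · exact Or.inr h1
  intro p q
  exact Relation.ReflTransGen.trans (uconn_symm (lift p.1 p.2)) (lift q.1 q.2)

end AuxStmt15

/-- A finite irreflexive oriented graph `G` has an iot-injective
homomorphism to `T_2^r` iff each connected component of `G` is (a) an oriented path on
at most four vertices, or (b) an oriented path with an alternating matching, or (c) an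
oriented cycle on `4k` vertices (`k ≥ 1`) with an alternating matching. -/
theorem stmt15 {V : Type} [Fintype V] (E : V → V → Prop)
    (hor : IsOriented E) (hirr : NoLoops E) :
    (∃ f : V → Fin 2, IsHom E T2r f ∧ IotInj E f) ↔
      ∀ x : V,
        (∃ (n : ℕ) (σ : ℕ → Bool), n + 1 ≤ 4 ∧ IsoRel (OPathRel n σ) (componentRel E x)) ∨
        (∃ (n : ℕ) (σ : ℕ → Bool) (μ : ℕ → Prop), PathAltMatching n σ μ ∧
            IsoRel (OPathRel n σ) (componentRel E x)) ∨
        (∃ (k : ℕ) (σ : ℕ → Bool) (μ : ℕ → Prop), 1 ≤ k ∧ CycAltMatching (4 * k) σ μ ∧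
            IsoRel (OCycRel (4 * k) σ) (componentRel E x)) := by
  classical
  constructor
  · rintro ⟨f, hhom, hiot⟩ x
    haveI : Nonempty {y // UConn E x y} := ⟨⟨x, Relation.ReflTransGen.refl⟩⟩
    set C := componentRel E x with hC
    have hor' : IsOriented C :=
      fun a b hne hc => hor a.val b.val (fun he => hne (Subtype.ext he)) hc
    have hirr' : NoLoops C := fun a hc => hirr a.val hc
    set g : {y // UConn E x y} → Fin 2 := fun a => f a.val with hg
    have hghom : IsHom C T2r g := fun a b hab => hhom _ _ hab
    have hgiot : IotInj C g := by
      intro a y hy z hz hyz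
      have hmem : ∀ w : {y // UConn E x y}, w ∈ ({y | C y a} ∪ {y | C a y}) →
          (w.val ∈ ({y | E y a.val} ∪ {y | E a.val y})) := by
        rintro w (hw | hw)
        · exact Or.inl hw
        · exact Or.inr hw
      exact Subtype.ext (hiot a.val (hmem y hy) (hmem z hz) hyz)
    have hdeg : ∀ w n1 n2 n3, AdjR C w n1 → AdjR C w n2 → AdjR C w n3 →
        n1 = n2 ∨ n1 = n3 ∨ n2 = n3 := by
      intro w n1 n2 n3 ha1 ha2 ha3
      have hm : ∀ b, AdjR C w b → b ∈ ({y | C y w} ∪ {y | C w y}) := by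
        rintro b (hb | hb)
        · exact Or.inr hb
        · exact Or.inl hb
      have hpig : g n1 = g n2 ∨ g n1 = g n3 ∨ g n2 = g n3 := by
        have hp : ∀ a b c : Fin 2, a = b ∨ a = c ∨ b = c := by decide
        exact hp _ _ _
      rcases hpig with hp | hp | hp
      · exact Or.inl (hgiot w (hm n1 ha1) (hm n2 ha2) hp)
      · exact Or.inr (Or.inl (hgiot w (hm n1 ha1) (hm n3 ha3) hp))
      · exact Or.inr (Or.inr (hgiot w (hm n2 ha2) (hm n3 ha3) hp))
    have hconn := comp_conn E x
    rcases classify C hor' hirr' hdeg hconn with ⟨n, σ', hiso⟩ | ⟨m, σ', hm3, hiso⟩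
    · obtain ⟨g0, hg0hom, hg0iot⟩ := iso_pull hiso g hghom hgiot
      obtain ⟨μ, hμ⟩ := matchP n σ' g0 hg0hom hg0iot
      exact Or.inr (Or.inl ⟨n, σ', μ, hμ, hiso⟩)
    · obtain ⟨g0, hg0hom, hg0iot⟩ := iso_pull hiso g hghom hgiot
      obtain ⟨k, μ, hk1, hk4, hcam⟩ := matchC m hm3 σ' g0 hg0hom hg0iot
      subst hk4
      exact Or.inr (Or.inr ⟨k, σ', μ, hk1, hcam, hiso⟩)
  · intro hx
    have key : ∀ z : V, ∃ g : {y // UConn E z y} → Fin 2,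
        IsHom (componentRel E z) T2r g ∧ IotInj (componentRel E z) g := by
      intro z
      rcases hx z with ⟨n, σ, hn4, hiso⟩ | ⟨n, σ, μ, hμ, hiso⟩ | ⟨k, σ, μ, hk, hμ, hiso⟩
      · have hμ' : PathAltMatching n σ (fun t => (n = 2 ∧ t = 0) ∨ (n = 3 ∧ t = 1)) := by
          refine ⟨?_, ?_, ?_, ?_⟩
          · rintro t (⟨h1, h2⟩|⟨h1, h2⟩) <;> omega
          · rintro t ⟨(⟨h1, h2⟩|⟨h1, h2⟩), (⟨h3, h4⟩|⟨h3, h4⟩)⟩ <;> omega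
          · intro v hv1 hv2
            by_cases hn2 : n = 2
            · exact Or.inl (Or.inl ⟨hn2, by omega⟩)
            · by_cases hn3 : n = 3
              · rcases show v = 1 ∨ v = 2 by omega with rfl | rfl
                · exact Or.inr (Or.inr ⟨hn3, by omega⟩)
                · exact Or.inl (Or.inr ⟨hn3, by omega⟩)
              · omega
          · rintro t t' (⟨h1, h2⟩|⟨h1, h2⟩) (⟨h3, h4⟩|⟨h3, h4⟩) htt _ <;> omega
        obtain ⟨f0, hf0h, hf0i⟩ := revP n σ _ hμ'
        exact iso_pull (iso_symm hiso) f0 hf0h hf0i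
      · obtain ⟨f0, hf0h, hf0i⟩ := revP n σ μ hμ
        exact iso_pull (iso_symm hiso) f0 hf0h hf0i
      · obtain ⟨f0, hf0h, hf0i⟩ := revC (4*k) σ μ (by omega) hμ
        exact iso_pull (iso_symm hiso) f0 hf0h hf0i
    set s : Setoid V :=
      ⟨UConn E, ⟨fun _ => Relation.ReflTransGen.refl, uconn_symm, Relation.ReflTransGen.trans⟩⟩
      with hs
    set G2 : (z : V) → ({y // UConn E z y} → Fin 2) := fun z => (key z).choose with hG2
    have hG2spec : ∀ z, IsHom (componentRel E z) T2r (G2 z) ∧ IotInj (componentRel E z) (G2 z) :=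
      fun z => (key z).choose_spec
    set rep : V → V := fun v => (Quotient.mk s v).out with hrepdef
    have hrep : ∀ v : V, UConn E (rep v) v := by
      intro v
      have h := @Quotient.exact V s _ _ (Quotient.out_eq (Quotient.mk s v))
      exact h
    have hrepc : ∀ {a b : V}, UConn E a b → rep a = rep b := by
      intro a b hab
      simp only [hrepdef]
      rw [Quotient.sound (s := s) hab]
    have hGcongr : ∀ (z z' : V) (hzz : z = z') (w : V) (h1 : UConn E z w) (h2 : UConn E z' w),
        G2 z ⟨w, h1⟩ = G2 z' ⟨w, h2⟩ := by
      rintro z _ rfl w h1 h2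
      rfl
    refine ⟨fun v => G2 (rep v) ⟨v, hrep v⟩, ?_, ?_⟩
    · intro a b hab
      have hr : rep a = rep b := hrepc (Relation.ReflTransGen.single (Or.inl hab))
      have hxb : UConn E (rep a) b := Relation.ReflTransGen.tail (hrep a) (Or.inl hab)
      have he : G2 (rep b) ⟨b, hrep b⟩ = G2 (rep a) ⟨b, hxb⟩ := hGcongr _ _ hr.symm _ _ _
      show T2r (G2 (rep a) ⟨a, hrep a⟩) (G2 (rep b) ⟨b, hrep b⟩)
      rw [he]
      exact (hG2spec (rep a)).1 ⟨a, hrep a⟩ ⟨b, hxb⟩ hab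
    · intro a y hy z hz hyz
      have hay : UConn E a y := by
        rcases hy with h | h
        · exact Relation.ReflTransGen.single (Or.inr h)
        · exact Relation.ReflTransGen.single (Or.inl h)
      have haz : UConn E a z := by
        rcases hz with h | h
        · exact Relation.ReflTransGen.single (Or.inr h)
        · exact Relation.ReflTransGen.single (Or.inl h)
      have hxy : UConn E (rep a) y := Relation.ReflTransGen.trans (hrep a) hay
      have hxz : UConn E (rep a) z := Relation.ReflTransGen.trans (hrep a) haz
      have hey : G2 (rep y) ⟨y, hrep y⟩ = G2 (rep a) ⟨y, hxy⟩ :=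
        hGcongr _ _ (hrepc (uconn_symm hay)) _ _ _
      have hez : G2 (rep z) ⟨z, hrep z⟩ = G2 (rep a) ⟨z, hxz⟩ :=
        hGcongr _ _ (hrepc (uconn_symm haz)) _ _ _
      have hmy : (⟨y, hxy⟩ : {w // UConn E (rep a) w}) ∈
          ({w | componentRel E (rep a) w ⟨a, hrep a⟩} ∪
            {w | componentRel E (rep a) ⟨a, hrep a⟩ w}) := by
        rcases hy with h | h
        · exact Or.inl h
        · exact Or.inr h
      have hmz : (⟨z, hxz⟩ : {w // UConn E (rep a) w}) ∈
          ({w | componentRel E (rep a) w ⟨a, hrep a⟩} ∪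
            {w | componentRel E (rep a) ⟨a, hrep a⟩ w}) := by
        rcases hz with h | h
        · exact Or.inl h
        · exact Or.inr h
      have heq := (hG2spec (rep a)).2 ⟨a, hrep a⟩ hmy hmz
        (hey.symm.trans (hyz.trans hez))
      exact congrArg Subtype.val heq
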